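/- For ψ = z₀u₀ + z₁u₁ + z₂u₂ + z₃u₃ with Σ|z_j|²=1, the eigenvalues of the reduced density matrix Tr_{CD}|ψ⟩⟨ψ| are P_j = |z_j|², the eigenvalues of Tr_{BD}|ψ⟩⟨ψ| are Q_j = |Σ_k A_{jk} z_k|², and the eigenvalues of Tr_{BC}|ψ⟩⟨ψ| are R_j = |Σ_k B_{jk} z_k|², where A = (1/2)[[1,1,1,1],[1,1,−1,−1],[1,−1,1,−1],[1,−1,−1,1]] and B = (1/2)[[1,−1,−1,−1],[1,−1,1,1],[1,1,−1,1],[1,1,1,−1]]. -/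

import Mathlib

open Matrix Polynomial

noncomputable section

/-- Bell state amplitudes on two qubits: |φ⁺⟩, |φ⁻⟩, |ψ⁺⟩, |ψ⁻⟩. -/
def bell : Fin 4 → Fin 2 → Fin 2 → ℂ :=
  ![fun a b => if a = b then (Real.sqrt 2)⁻¹ else 0,
    fun a b => if a = b then (if a = 0 then (Real.sqrt 2)⁻¹ else -(Real.sqrt 2)⁻¹) else 0,
    fun a b => if a ≠ b then (Real.sqrt 2)⁻¹ else 0,
    fun a b => if a ≠ b then (if a = 0 then (Real.sqrt 2)⁻¹ else -(Real.sqrt 2)⁻¹) else 0]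

/-- Amplitudes of the state ψ = Σⱼ zⱼ uⱼ, with uⱼ the Bell state `bell j` on qubits (A,B)
    tensored with `bell j` on qubits (C,D); indices ordered A,B,C,D. -/
def psi (z : Fin 4 → ℂ) (a b c d : Fin 2) : ℂ := ∑ j, z j * bell j a b * bell j c d

/-- Reduced density matrix of qubits A,B: partial trace over C,D of |ψ⟩⟨ψ|. -/
def rhoAB (z : Fin 4 → ℂ) : Matrix (Fin 2 × Fin 2) (Fin 2 × Fin 2) ℂ :=
  fun p q => ∑ c, ∑ d, psi z p.1 p.2 c d * (starRingEnd ℂ) (psi z q.1 q.2 c d)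

/-- Reduced density matrix of qubits A,C: partial trace over B,D of |ψ⟩⟨ψ|. -/
def rhoAC (z : Fin 4 → ℂ) : Matrix (Fin 2 × Fin 2) (Fin 2 × Fin 2) ℂ :=
  fun p q => ∑ b, ∑ d, psi z p.1 b p.2 d * (starRingEnd ℂ) (psi z q.1 b q.2 d)

/-- Reduced density matrix of qubits A,D: partial trace over B,C of |ψ⟩⟨ψ|. -/
def rhoAD (z : Fin 4 → ℂ) : Matrix (Fin 2 × Fin 2) (Fin 2 × Fin 2) ℂ :=
  fun p q => ∑ b, ∑ c, psi z p.1 b c p.2 * (starRingEnd ℂ) (psi z q.1 b c q.2)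

/-- The orthogonal matrix A. -/
def Amat : Matrix (Fin 4) (Fin 4) ℂ :=
  (1/2 : ℂ) • !![1,1,1,1; 1,1,-1,-1; 1,-1,1,-1; 1,-1,-1,1]

/-- The orthogonal matrix B. -/
def Bmat : Matrix (Fin 4) (Fin 4) ℂ :=
  (1/2 : ℂ) • !![1,-1,-1,-1; 1,-1,1,1; 1,1,-1,1; 1,1,1,-1]

lemma bell0 (a b : Fin 2) : bell 0 a b = if a = b then ((Real.sqrt 2 : ℝ) : ℂ)⁻¹ else 0 := by simp [bell]
lemma bell1 (a b : Fin 2) : bell 1 a b = if a = b then (if a = 0 then ((Real.sqrt 2 : ℝ) : ℂ)⁻¹ else -((Real.sqrt 2 : ℝ) : ℂ)⁻¹) else 0 := by simp [bell]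
lemma bell2 (a b : Fin 2) : bell 2 a b = if a ≠ b then ((Real.sqrt 2 : ℝ) : ℂ)⁻¹ else 0 := by simp [bell]
lemma bell3 (a b : Fin 2) : bell 3 a b = if a ≠ b then (if a = 0 then ((Real.sqrt 2 : ℝ) : ℂ)⁻¹ else -((Real.sqrt 2 : ℝ) : ℂ)⁻¹) else 0 := by simp [bell]

lemma hs2 : ((Real.sqrt 2 : ℝ) : ℂ)⁻¹ * ((Real.sqrt 2 : ℝ) : ℂ)⁻¹ = 1/2 := by
  rw [← mul_inv, ← Complex.ofReal_mul, Real.mul_self_sqrt (by norm_num : (0:ℝ) ≤ 2)]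
  norm_num

lemma psi_eq (z : Fin 4 → ℂ) (a b c d : Fin 2) :
    psi z a b c d =
      if a = b then (if c = d then (z 0 + (if a = c then z 1 else -z 1))/2 else 0)
      else (if c = d then 0 else (z 2 + (if a = c then z 3 else -z 3))/2) := by
  fin_cases a <;> fin_cases b <;> fin_cases c <;> fin_cases d <;>
    · simp only [psi, Fin.sum_univ_four, bell0, bell1, bell2, bell3]
      norm_num
      try ring_nf
      try rw [show ((Real.sqrt 2 : ℝ) : ℂ)⁻¹ ^ 2 = 1/2 by rw [sq]; exact hs2]
      try ring

lemma det_fin_four' {R : Type*} [CommRing R] (M : Matrix (Fin 4) (Fin 4) R) :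
    M.det = M 0 0 * (M 1 1*(M 2 2*M 3 3 - M 2 3*M 3 2) - M 1 2*(M 2 1*M 3 3 - M 2 3*M 3 1) + M 1 3*(M 2 1*M 3 2 - M 2 2*M 3 1))
          - M 0 1 * (M 1 0*(M 2 2*M 3 3 - M 2 3*M 3 2) - M 1 2*(M 2 0*M 3 3 - M 2 3*M 3 0) + M 1 3*(M 2 0*M 3 2 - M 2 2*M 3 0))
          + M 0 2 * (M 1 0*(M 2 1*M 3 3 - M 2 3*M 3 1) - M 1 1*(M 2 0*M 3 3 - M 2 3*M 3 0) + M 1 3*(M 2 0*M 3 1 - M 2 1*M 3 0))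
          - M 0 3 * (M 1 0*(M 2 1*M 3 2 - M 2 2*M 3 1) - M 1 1*(M 2 0*M 3 2 - M 2 2*M 3 0) + M 1 2*(M 2 0*M 3 1 - M 2 1*M 3 0)) := by
  rw [Matrix.det_succ_row_zero, Fin.sum_univ_four]
  simp [Matrix.det_fin_three, Matrix.submatrix_apply, Fin.sum_univ_succ,
    show (Fin.succ 2 : Fin 4) = 3 from rfl,
    show Fin.succAbove (1 : Fin 4) 2 = 3 from rfl,
    show Fin.succAbove (2 : Fin 4) 1 = 1 from rfl,
    show Fin.succAbove (2 : Fin 4) 2 = 3 from rfl,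
    show Fin.succAbove (3 : Fin 4) 1 = 1 from rfl,
    show Fin.succAbove (3 : Fin 4) 2 = 2 from rfl,
    show ((3 : Fin 4) : ℕ) = 3 from rfl]
  ring

lemma eval_charpoly {n : Type*} [DecidableEq n] [Fintype n] (M : Matrix n n ℂ) (x : ℂ) :
    (M.charpoly).eval x = (x • (1 : Matrix n n ℂ) - M).det := by
  rw [Matrix.charpoly, ← Polynomial.coe_evalRingHom, RingHom.map_det]
  congr 1
  ext i j
  simp [Matrix.charmatrix, Matrix.one_apply, Matrix.smul_apply, Matrix.diagonal_apply]
  split <;> simp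

lemma habs (w : ℂ) : ((‖w‖ ^ 2 : ℝ) : ℂ) = w * (starRingEnd ℂ) w := by
  rw [Complex.mul_conj, Complex.sq_norm]

def e4 : Fin 2 × Fin 2 ≃ Fin 4 where
  toFun p := ⟨p.1.val * 2 + p.2.val, by omega⟩
  invFun i := (⟨i.val / 2, by omega⟩, ⟨i.val % 2, by omega⟩)
  left_inv := by decide
  right_inv := by decide

lemma Asum (z : Fin 4 → ℂ) (j : Fin 4) : (∑ k, Amat j k * z k) =
    ![(z 0 + z 1 + z 2 + z 3)/2, (z 0 + z 1 - z 2 - z 3)/2,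
      (z 0 - z 1 + z 2 - z 3)/2, (z 0 - z 1 - z 2 + z 3)/2] j := by
  fin_cases j <;>
    · simp [Amat, Fin.sum_univ_four, Matrix.smul_apply]
      ring

lemma Bsum (z : Fin 4 → ℂ) (j : Fin 4) : (∑ k, Bmat j k * z k) =
    ![(z 0 - z 1 - z 2 - z 3)/2, (z 0 - z 1 + z 2 + z 3)/2,
      (z 0 + z 1 - z 2 + z 3)/2, (z 0 + z 1 + z 2 - z 3)/2] j := by
  fin_cases j <;>
    · simp [Bmat, Fin.sum_univ_four, Matrix.smul_apply]
      ring


lemma det_block {R : Type*} [CommRing R] (M : Matrix (Fin 4) (Fin 4) R)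
    (h02 : M 0 2 = 0) (h03 : M 0 3 = 0) (h12 : M 1 2 = 0) (h13 : M 1 3 = 0)
    (h20 : M 2 0 = 0) (h21 : M 2 1 = 0) (h30 : M 3 0 = 0) (h31 : M 3 1 = 0) :
    M.det = (M 0 0 * M 1 1 - M 0 1 * M 1 0) * (M 2 2 * M 3 3 - M 2 3 * M 3 2) := by
  rw [det_fin_four', h02, h03, h12, h13, h20, h21, h30, h31]
  ring

/-- parity-ordered equiv: (0,0) goes to 0, (1,1) to 1, (0,1) to 2, (1,0) to 3 -/
def e4p : Fin 2 × Fin 2 ≃ Fin 4 where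
  toFun p := if p.1 = p.2 then (if p.1 = 0 then 0 else 1) else (if p.1 = 0 then 2 else 3)
  invFun i := ![((0:Fin 2),(0:Fin 2)), (1,1), (0,1), (1,0)] i
  left_inv := by decide
  right_inv := by decide

/-- odd-first equiv: (0,1) goes to 0, (1,0) to 1, (0,0) to 2, (1,1) to 3 -/
def e4q : Fin 2 × Fin 2 ≃ Fin 4 where
  toFun p := if p.1 = p.2 then (if p.1 = 0 then 2 else 3) else (if p.1 = 0 then 0 else 1)
  invFun i := ![((0:Fin 2),(1:Fin 2)), (1,0), (0,0), (1,1)] i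
  left_inv := by decide
  right_inv := by decide


set_option maxHeartbeats 4000000 in
/-- The eigenvalues of the three two-qubit reduced density matrices. -/
theorem reduced_density_eigenvalues (z : Fin 4 → ℂ)
    (hnorm : ∑ j, ‖z j‖ ^ 2 = 1) :
    (rhoAB z).charpoly = ∏ j, (X - C (((‖z j‖)^2 : ℝ) : ℂ)) ∧
    (rhoAC z).charpoly = ∏ j, (X - C (((‖∑ k, Amat j k * z k‖)^2 : ℝ) : ℂ)) ∧
    (rhoAD z).charpoly = ∏ j, (X - C (((‖∑ k, Bmat j k * z k‖)^2 : ℝ) : ℂ)) := by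
  refine ⟨?_, ?_, ?_⟩
  · apply Polynomial.funext
    intro x
    rw [_root_.eval_charpoly, ← Matrix.det_reindex_self e4p]
    have h02 : (reindex e4p e4p) (x • 1 - rhoAB z) 0 2 = 0 := by
      simp only [Matrix.reindex_apply, Matrix.submatrix_apply, Matrix.sub_apply, Matrix.smul_apply,
        Matrix.one_apply, show e4p.symm 0 = (0,0) from rfl, show e4p.symm 2 = (0,1) from rfl,
        rhoAB, psi_eq, Fin.sum_univ_two, Prod.mk.injEq]
      norm_num
    have h03 : (reindex e4p e4p) (x • 1 - rhoAB z) 0 3 = 0 := by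
      simp only [Matrix.reindex_apply, Matrix.submatrix_apply, Matrix.sub_apply, Matrix.smul_apply,
        Matrix.one_apply, show e4p.symm 0 = (0,0) from rfl, show e4p.symm 3 = (1,0) from rfl,
        rhoAB, psi_eq, Fin.sum_univ_two, Prod.mk.injEq]
      norm_num
    have h12 : (reindex e4p e4p) (x • 1 - rhoAB z) 1 2 = 0 := by
      simp only [Matrix.reindex_apply, Matrix.submatrix_apply, Matrix.sub_apply, Matrix.smul_apply,
        Matrix.one_apply, show e4p.symm 1 = (1,1) from rfl, show e4p.symm 2 = (0,1) from rfl,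
        rhoAB, psi_eq, Fin.sum_univ_two, Prod.mk.injEq]
      norm_num
    have h13 : (reindex e4p e4p) (x • 1 - rhoAB z) 1 3 = 0 := by
      simp only [Matrix.reindex_apply, Matrix.submatrix_apply, Matrix.sub_apply, Matrix.smul_apply,
        Matrix.one_apply, show e4p.symm 1 = (1,1) from rfl, show e4p.symm 3 = (1,0) from rfl,
        rhoAB, psi_eq, Fin.sum_univ_two, Prod.mk.injEq]
      norm_num
    have h20 : (reindex e4p e4p) (x • 1 - rhoAB z) 2 0 = 0 := by
      simp only [Matrix.reindex_apply, Matrix.submatrix_apply, Matrix.sub_apply, Matrix.smul_apply,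
        Matrix.one_apply, show e4p.symm 2 = (0,1) from rfl, show e4p.symm 0 = (0,0) from rfl,
        rhoAB, psi_eq, Fin.sum_univ_two, Prod.mk.injEq]
      norm_num
    have h21 : (reindex e4p e4p) (x • 1 - rhoAB z) 2 1 = 0 := by
      simp only [Matrix.reindex_apply, Matrix.submatrix_apply, Matrix.sub_apply, Matrix.smul_apply,
        Matrix.one_apply, show e4p.symm 2 = (0,1) from rfl, show e4p.symm 1 = (1,1) from rfl,
        rhoAB, psi_eq, Fin.sum_univ_two, Prod.mk.injEq]
      norm_num
    have h30 : (reindex e4p e4p) (x • 1 - rhoAB z) 3 0 = 0 := by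
      simp only [Matrix.reindex_apply, Matrix.submatrix_apply, Matrix.sub_apply, Matrix.smul_apply,
        Matrix.one_apply, show e4p.symm 3 = (1,0) from rfl, show e4p.symm 0 = (0,0) from rfl,
        rhoAB, psi_eq, Fin.sum_univ_two, Prod.mk.injEq]
      norm_num
    have h31 : (reindex e4p e4p) (x • 1 - rhoAB z) 3 1 = 0 := by
      simp only [Matrix.reindex_apply, Matrix.submatrix_apply, Matrix.sub_apply, Matrix.smul_apply,
        Matrix.one_apply, show e4p.symm 3 = (1,0) from rfl, show e4p.symm 1 = (1,1) from rfl,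
        rhoAB, psi_eq, Fin.sum_univ_two, Prod.mk.injEq]
      norm_num
    rw [det_block _ h02 h03 h12 h13 h20 h21 h30 h31]
    simp only [eval_prod, eval_mul, eval_sub, eval_X, eval_C, Fin.prod_univ_four, habs]
    rw [mul_assoc]
    congr 1 <;>
    · simp only [Matrix.reindex_apply, Matrix.submatrix_apply, Matrix.sub_apply, Matrix.smul_apply,
        Matrix.one_apply, show e4p.symm 0 = (0,0) from rfl,
        show e4p.symm 1 = (1,1) from rfl,
        show e4p.symm 2 = (0,1) from rfl,
        show e4p.symm 3 = (1,0) from rfl,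
        rhoAB, psi_eq, Fin.sum_univ_two, Prod.mk.injEq, map_add, map_sub, map_div₀,
        _root_.map_mul, map_neg, map_zero, map_ofNat, Complex.conj_ofNat,
        Matrix.cons_val_zero, Matrix.cons_val_one, Matrix.head_cons]
      norm_num
      ring_nf
      try simp only [map_ofNat]
      try ring
  · apply Polynomial.funext
    intro x
    rw [_root_.eval_charpoly, ← Matrix.det_reindex_self e4p]
    have h02 : (reindex e4p e4p) (x • 1 - rhoAC z) 0 2 = 0 := by
      simp only [Matrix.reindex_apply, Matrix.submatrix_apply, Matrix.sub_apply, Matrix.smul_apply,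
        Matrix.one_apply, show e4p.symm 0 = (0,0) from rfl, show e4p.symm 2 = (0,1) from rfl,
        rhoAC, psi_eq, Fin.sum_univ_two, Prod.mk.injEq]
      norm_num
    have h03 : (reindex e4p e4p) (x • 1 - rhoAC z) 0 3 = 0 := by
      simp only [Matrix.reindex_apply, Matrix.submatrix_apply, Matrix.sub_apply, Matrix.smul_apply,
        Matrix.one_apply, show e4p.symm 0 = (0,0) from rfl, show e4p.symm 3 = (1,0) from rfl,
        rhoAC, psi_eq, Fin.sum_univ_two, Prod.mk.injEq]
      norm_num
    have h12 : (reindex e4p e4p) (x • 1 - rhoAC z) 1 2 = 0 := by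
      simp only [Matrix.reindex_apply, Matrix.submatrix_apply, Matrix.sub_apply, Matrix.smul_apply,
        Matrix.one_apply, show e4p.symm 1 = (1,1) from rfl, show e4p.symm 2 = (0,1) from rfl,
        rhoAC, psi_eq, Fin.sum_univ_two, Prod.mk.injEq]
      norm_num
    have h13 : (reindex e4p e4p) (x • 1 - rhoAC z) 1 3 = 0 := by
      simp only [Matrix.reindex_apply, Matrix.submatrix_apply, Matrix.sub_apply, Matrix.smul_apply,
        Matrix.one_apply, show e4p.symm 1 = (1,1) from rfl, show e4p.symm 3 = (1,0) from rfl,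
        rhoAC, psi_eq, Fin.sum_univ_two, Prod.mk.injEq]
      norm_num
    have h20 : (reindex e4p e4p) (x • 1 - rhoAC z) 2 0 = 0 := by
      simp only [Matrix.reindex_apply, Matrix.submatrix_apply, Matrix.sub_apply, Matrix.smul_apply,
        Matrix.one_apply, show e4p.symm 2 = (0,1) from rfl, show e4p.symm 0 = (0,0) from rfl,
        rhoAC, psi_eq, Fin.sum_univ_two, Prod.mk.injEq]
      norm_num
    have h21 : (reindex e4p e4p) (x • 1 - rhoAC z) 2 1 = 0 := by
      simp only [Matrix.reindex_apply, Matrix.submatrix_apply, Matrix.sub_apply, Matrix.smul_apply,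
        Matrix.one_apply, show e4p.symm 2 = (0,1) from rfl, show e4p.symm 1 = (1,1) from rfl,
        rhoAC, psi_eq, Fin.sum_univ_two, Prod.mk.injEq]
      norm_num
    have h30 : (reindex e4p e4p) (x • 1 - rhoAC z) 3 0 = 0 := by
      simp only [Matrix.reindex_apply, Matrix.submatrix_apply, Matrix.sub_apply, Matrix.smul_apply,
        Matrix.one_apply, show e4p.symm 3 = (1,0) from rfl, show e4p.symm 0 = (0,0) from rfl,
        rhoAC, psi_eq, Fin.sum_univ_two, Prod.mk.injEq]
      norm_num
    have h31 : (reindex e4p e4p) (x • 1 - rhoAC z) 3 1 = 0 := by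
      simp only [Matrix.reindex_apply, Matrix.submatrix_apply, Matrix.sub_apply, Matrix.smul_apply,
        Matrix.one_apply, show e4p.symm 3 = (1,0) from rfl, show e4p.symm 1 = (1,1) from rfl,
        rhoAC, psi_eq, Fin.sum_univ_two, Prod.mk.injEq]
      norm_num
    rw [det_block _ h02 h03 h12 h13 h20 h21 h30 h31]
    simp only [Asum, eval_prod, eval_mul, eval_sub, eval_X, eval_C, Fin.prod_univ_four, habs]
    rw [mul_assoc]
    congr 1 <;>
    · simp only [Matrix.reindex_apply, Matrix.submatrix_apply, Matrix.sub_apply, Matrix.smul_apply,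
        Matrix.one_apply, show e4p.symm 0 = (0,0) from rfl,
        show e4p.symm 1 = (1,1) from rfl,
        show e4p.symm 2 = (0,1) from rfl,
        show e4p.symm 3 = (1,0) from rfl,
        rhoAC, psi_eq, Fin.sum_univ_two, Prod.mk.injEq, map_add, map_sub, map_div₀,
        _root_.map_mul, map_neg, map_zero, map_ofNat, Complex.conj_ofNat,
        Matrix.cons_val_zero, Matrix.cons_val_one, Matrix.head_cons, Matrix.cons_val_two, Matrix.cons_val_three]
      norm_num
      ring_nf
      try simp only [map_ofNat]
      try ring
  · apply Polynomial.funext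
    intro x
    rw [_root_.eval_charpoly, ← Matrix.det_reindex_self e4q]
    have h02 : (reindex e4q e4q) (x • 1 - rhoAD z) 0 2 = 0 := by
      simp only [Matrix.reindex_apply, Matrix.submatrix_apply, Matrix.sub_apply, Matrix.smul_apply,
        Matrix.one_apply, show e4q.symm 0 = (0,1) from rfl, show e4q.symm 2 = (0,0) from rfl,
        rhoAD, psi_eq, Fin.sum_univ_two, Prod.mk.injEq]
      norm_num
    have h03 : (reindex e4q e4q) (x • 1 - rhoAD z) 0 3 = 0 := by
      simp only [Matrix.reindex_apply, Matrix.submatrix_apply, Matrix.sub_apply, Matrix.smul_apply,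
        Matrix.one_apply, show e4q.symm 0 = (0,1) from rfl, show e4q.symm 3 = (1,1) from rfl,
        rhoAD, psi_eq, Fin.sum_univ_two, Prod.mk.injEq]
      norm_num
    have h12 : (reindex e4q e4q) (x • 1 - rhoAD z) 1 2 = 0 := by
      simp only [Matrix.reindex_apply, Matrix.submatrix_apply, Matrix.sub_apply, Matrix.smul_apply,
        Matrix.one_apply, show e4q.symm 1 = (1,0) from rfl, show e4q.symm 2 = (0,0) from rfl,
        rhoAD, psi_eq, Fin.sum_univ_two, Prod.mk.injEq]
      norm_num
    have h13 : (reindex e4q e4q) (x • 1 - rhoAD z) 1 3 = 0 := by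
      simp only [Matrix.reindex_apply, Matrix.submatrix_apply, Matrix.sub_apply, Matrix.smul_apply,
        Matrix.one_apply, show e4q.symm 1 = (1,0) from rfl, show e4q.symm 3 = (1,1) from rfl,
        rhoAD, psi_eq, Fin.sum_univ_two, Prod.mk.injEq]
      norm_num
    have h20 : (reindex e4q e4q) (x • 1 - rhoAD z) 2 0 = 0 := by
      simp only [Matrix.reindex_apply, Matrix.submatrix_apply, Matrix.sub_apply, Matrix.smul_apply,
        Matrix.one_apply, show e4q.symm 2 = (0,0) from rfl, show e4q.symm 0 = (0,1) from rfl,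
        rhoAD, psi_eq, Fin.sum_univ_two, Prod.mk.injEq]
      norm_num
    have h21 : (reindex e4q e4q) (x • 1 - rhoAD z) 2 1 = 0 := by
      simp only [Matrix.reindex_apply, Matrix.submatrix_apply, Matrix.sub_apply, Matrix.smul_apply,
        Matrix.one_apply, show e4q.symm 2 = (0,0) from rfl, show e4q.symm 1 = (1,0) from rfl,
        rhoAD, psi_eq, Fin.sum_univ_two, Prod.mk.injEq]
      norm_num
    have h30 : (reindex e4q e4q) (x • 1 - rhoAD z) 3 0 = 0 := by
      simp only [Matrix.reindex_apply, Matrix.submatrix_apply, Matrix.sub_apply, Matrix.smul_apply,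
        Matrix.one_apply, show e4q.symm 3 = (1,1) from rfl, show e4q.symm 0 = (0,1) from rfl,
        rhoAD, psi_eq, Fin.sum_univ_two, Prod.mk.injEq]
      norm_num
    have h31 : (reindex e4q e4q) (x • 1 - rhoAD z) 3 1 = 0 := by
      simp only [Matrix.reindex_apply, Matrix.submatrix_apply, Matrix.sub_apply, Matrix.smul_apply,
        Matrix.one_apply, show e4q.symm 3 = (1,1) from rfl, show e4q.symm 1 = (1,0) from rfl,
        rhoAD, psi_eq, Fin.sum_univ_two, Prod.mk.injEq]
      norm_num
    rw [det_block _ h02 h03 h12 h13 h20 h21 h30 h31]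
    simp only [Bsum, eval_prod, eval_mul, eval_sub, eval_X, eval_C, Fin.prod_univ_four, habs]
    rw [mul_assoc]
    congr 1 <;>
    · simp only [Matrix.reindex_apply, Matrix.submatrix_apply, Matrix.sub_apply, Matrix.smul_apply,
        Matrix.one_apply, show e4q.symm 0 = (0,1) from rfl,
        show e4q.symm 1 = (1,0) from rfl,
        show e4q.symm 2 = (0,0) from rfl,
        show e4q.symm 3 = (1,1) from rfl,
        rhoAD, psi_eq, Fin.sum_univ_two, Prod.mk.injEq, map_add, map_sub, map_div₀,
        _root_.map_mul, map_neg, map_zero, map_ofNat, Complex.conj_ofNat,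
        Matrix.cons_val_zero, Matrix.cons_val_one, Matrix.head_cons, Matrix.cons_val_two, Matrix.cons_val_three]
      norm_num
      ring_nf
      try simp only [map_ofNat]
      try ring
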